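/- For finite concept classes C₁ and C₂ over disjoint finite domains, ANCTD(C₁ ⊔ C₂) = ANCTD(C₁) + ANCTD(C₂), where ANCTD is the average no-clash teaching dimension and ⊔ is the free combination. -/

import Mathlib

open Finset

variable {X : Type*} [DecidableEq X]

/-- A sample set `S` is consistent with concept `C`. -/
def Consistent (C : Finset X) (S : Finset (X × Bool)) : Prop :=
  ∀ p ∈ S, (p.1 ∈ C ↔ p.2 = true)

/-- `T` is a teacher mapping for the class `𝒞`. -/
def IsTeacher (𝒞 : Finset (Finset X)) (T : Finset X → Finset (X × Bool)) : Prop :=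
  ∀ C ∈ 𝒞, Consistent C (T C)

/-- `T` is non-clashing on `𝒞`. -/
def NonClashing (𝒞 : Finset (Finset X)) (T : Finset X → Finset (X × Bool)) : Prop :=
  ∀ C ∈ 𝒞, ∀ C' ∈ 𝒞, C ≠ C' → ¬ (Consistent C' (T C) ∧ Consistent C (T C'))

/-- The no-clash teaching dimension. -/
noncomputable def NCTD (𝒞 : Finset (Finset X)) : ℕ :=
  sInf {d | ∃ T : Finset X → Finset (X × Bool),
    IsTeacher 𝒞 T ∧ NonClashing 𝒞 T ∧ ∀ C ∈ 𝒞, (T C).card ≤ d}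

/-- `T` is a positive teacher mapping for `𝒞` (positive examples only). -/
def IsPosTeacher (𝒞 : Finset (Finset X)) (T : Finset X → Finset X) : Prop :=
  ∀ C ∈ 𝒞, T C ⊆ C

/-- A positive teacher mapping is non-clashing on `𝒞`. -/
def PosNonClashing (𝒞 : Finset (Finset X)) (T : Finset X → Finset X) : Prop :=
  ∀ C ∈ 𝒞, ∀ C' ∈ 𝒞, C ≠ C' → ¬ (T C ⊆ C' ∧ T C' ⊆ C)

/-- The positive no-clash teaching dimension. -/
noncomputable def NCTDplus (𝒞 : Finset (Finset X)) : ℕ :=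
  sInf {d | ∃ T : Finset X → Finset X,
    IsPosTeacher 𝒞 T ∧ PosNonClashing 𝒞 T ∧ ∀ C ∈ 𝒞, (T C).card ≤ d}

/-- The average no-clash teaching dimension (real-valued). -/
noncomputable def ANCTD (𝒞 : Finset (Finset X)) : ℝ :=
  sInf {q : ℝ | ∃ T : Finset X → Finset (X × Bool),
    IsTeacher 𝒞 T ∧ NonClashing 𝒞 T ∧
      q = (∑ C ∈ 𝒞, ((T C).card : ℝ)) / 𝒞.card}

/-- The number of neighbors of `C` in `𝒞` (concepts at symmetric difference one). -/
def degIn (𝒞 : Finset (Finset X)) (C : Finset X) : ℕ :=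
  (𝒞.filter (fun C' => ((C \ C') ∪ (C' \ C)).card = 1)).card

/-- The average degree of `𝒞`. -/
noncomputable def degAvg (𝒞 : Finset (Finset X)) : ℝ :=
  (∑ C ∈ 𝒞, (degIn 𝒞 C : ℝ)) / 𝒞.card

variable {X₁ X₂ : Type*} [DecidableEq X₁] [DecidableEq X₂]

/-- The free combination of two concept classes over disjoint domains. -/
def FreeComb (𝒞₁ : Finset (Finset X₁)) (𝒞₂ : Finset (Finset X₂)) :
    Finset (Finset (X₁ ⊕ X₂)) :=
  (𝒞₁ ×ˢ 𝒞₂).image (fun p => p.1.image Sum.inl ∪ p.2.image Sum.inr)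

set_option linter.unusedSectionVars false

-- auxiliary
section Aux

/-- set witnessing ANCTD -/
def ASet (𝒞 : Finset (Finset X)) : Set ℝ :=
  {q : ℝ | ∃ T : Finset X → Finset (X × Bool),
    IsTeacher 𝒞 T ∧ NonClashing 𝒞 T ∧
      q = (∑ C ∈ 𝒞, ((T C).card : ℝ)) / 𝒞.card}

lemma ANCTD_eq (𝒞 : Finset (Finset X)) : ANCTD 𝒞 = sInf (ASet 𝒞) := rfl

lemma ASet_bddBelow (𝒞 : Finset (Finset X)) : BddBelow (ASet 𝒞) := by
  refine ⟨0, fun q hq => ?_⟩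
  obtain ⟨T, _, _, rfl⟩ := hq
  positivity

noncomputable def trivT (𝒞 : Finset (Finset X)) [Fintype X] : Finset X → Finset (X × Bool) :=
  fun C => Finset.univ.image (fun x => (x, decide (x ∈ C)))

lemma trivT_teacher [Fintype X] (𝒞 : Finset (Finset X)) : IsTeacher 𝒞 (trivT 𝒞) := by
  intro C _ p hp
  simp only [trivT, mem_image, mem_univ, true_and] at hp
  obtain ⟨x, rfl⟩ := hp
  simp

lemma trivT_nonclashing [Fintype X] (𝒞 : Finset (Finset X)) : NonClashing 𝒞 (trivT 𝒞) := by
  intro C _ C' _ hne ⟨h1, _⟩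
  apply hne
  ext x
  have := h1 (x, decide (x ∈ C)) (by simp [trivT])
  simp at this
  exact this.symm

lemma ASet_nonempty [Fintype X] (𝒞 : Finset (Finset X)) : (ASet 𝒞).Nonempty :=
  ⟨_, trivT 𝒞, trivT_teacher 𝒞, trivT_nonclashing 𝒞, rfl⟩

lemma ANCTD_le_of_mem [Fintype X] (𝒞 : Finset (Finset X)) {q : ℝ} (hq : q ∈ ASet 𝒞) :
    ANCTD 𝒞 ≤ q := csInf_le (ASet_bddBelow 𝒞) hq

-- the combination map
def comb (C₁ : Finset X₁) (C₂ : Finset X₂) : Finset (X₁ ⊕ X₂) :=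
  C₁.image Sum.inl ∪ C₂.image Sum.inr

lemma mem_comb_inl {C₁ : Finset X₁} {C₂ : Finset X₂} {x : X₁} :
    Sum.inl x ∈ comb C₁ C₂ ↔ x ∈ C₁ := by simp [comb]

lemma mem_comb_inr {C₁ : Finset X₁} {C₂ : Finset X₂} {y : X₂} :
    Sum.inr y ∈ comb C₁ C₂ ↔ y ∈ C₂ := by simp [comb]

lemma comb_inj {C₁ D₁ : Finset X₁} {C₂ D₂ : Finset X₂} (h : comb C₁ C₂ = comb D₁ D₂) :
    C₁ = D₁ ∧ C₂ = D₂ := by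
  constructor
  · ext x; rw [← mem_comb_inl (C₂ := C₂), h, mem_comb_inl]
  · ext y; rw [← mem_comb_inr (C₁ := C₁), h, mem_comb_inr]

lemma mem_freeComb {𝒞₁ : Finset (Finset X₁)} {𝒞₂ : Finset (Finset X₂)}
    {C₁ : Finset X₁} {C₂ : Finset X₂} (h1 : C₁ ∈ 𝒞₁) (h2 : C₂ ∈ 𝒞₂) :
    comb C₁ C₂ ∈ FreeComb 𝒞₁ 𝒞₂ := by
  simp only [FreeComb, mem_image, mem_product]
  exact ⟨(C₁, C₂), ⟨h1, h2⟩, rfl⟩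

-- sample projections
noncomputable def lS (S : Finset ((X₁ ⊕ X₂) × Bool)) : Finset (X₁ × Bool) :=
  S.preimage (Prod.map Sum.inl id)
    ((Sum.inl_injective.prodMap Function.injective_id).injOn)

noncomputable def rS (S : Finset ((X₁ ⊕ X₂) × Bool)) : Finset (X₂ × Bool) :=
  S.preimage (Prod.map Sum.inr id)
    ((Sum.inr_injective.prodMap Function.injective_id).injOn)

lemma mem_lS {S : Finset ((X₁ ⊕ X₂) × Bool)} {x : X₁} {b : Bool} :
    (x, b) ∈ lS S ↔ (Sum.inl x, b) ∈ S := by simp [lS]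

lemma mem_rS {S : Finset ((X₁ ⊕ X₂) × Bool)} {y : X₂} {b : Bool} :
    (y, b) ∈ rS S ↔ (Sum.inr y, b) ∈ S := by simp [rS]

lemma card_split (S : Finset ((X₁ ⊕ X₂) × Bool)) :
    (S.card : ℝ) = (lS S).card + (rS S).card := by
  have hinl : Function.Injective (Prod.map (Sum.inl : X₁ → X₁ ⊕ X₂) (id : Bool → Bool)) :=
    Sum.inl_injective.prodMap Function.injective_id
  have hinr : Function.Injective (Prod.map (Sum.inr : X₂ → X₁ ⊕ X₂) (id : Bool → Bool)) :=
    Sum.inr_injective.prodMap Function.injective_id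
  have key : S = (lS S).image (Prod.map Sum.inl id) ∪ (rS S).image (Prod.map Sum.inr id) := by
    ext ⟨x, b⟩
    cases x <;> simp [mem_lS, mem_rS, Prod.ext_iff]
  have hdisj : Disjoint ((lS S).image (Prod.map Sum.inl id))
      ((rS S).image (Prod.map Sum.inr id)) := by
    rw [disjoint_left]
    rintro ⟨x, b⟩ ha hb
    simp only [Finset.mem_image, Prod.map, Prod.mk.injEq] at ha hb
    obtain ⟨_, _, hx1, _⟩ := ha
    obtain ⟨_, _, hx2, _⟩ := hb
    rw [← hx1] at hx2
    cases hx2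
  nth_rewrite 1 [key]
  rw [card_union_of_disjoint hdisj,
    Finset.card_image_of_injective _ hinl, Finset.card_image_of_injective _ hinr]
  push_cast
  ring

lemma consistent_comb {C₁ : Finset X₁} {C₂ : Finset X₂} {S : Finset ((X₁ ⊕ X₂) × Bool)} :
    Consistent (comb C₁ C₂) S ↔ Consistent C₁ (lS S) ∧ Consistent C₂ (rS S) := by
  constructor
  · intro h
    constructor
    · rintro ⟨x, b⟩ hp
      have := h (Sum.inl x, b) (mem_lS.mp hp)
      simpa [mem_comb_inl] using this
    · rintro ⟨y, b⟩ hp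
      have := h (Sum.inr y, b) (mem_rS.mp hp)
      simpa [mem_comb_inr] using this
  · rintro ⟨hl, hr⟩ ⟨x, b⟩ hp
    cases x with
    | inl x => simpa [mem_comb_inl] using hl (x, b) (mem_lS.mpr hp)
    | inr y => simpa [mem_comb_inr] using hr (y, b) (mem_rS.mpr hp)

end Aux

/-- additivity of ANCTD under free combination. -/
theorem ANCTD_freeComb [Fintype X₁] [Fintype X₂]
    (𝒞₁ : Finset (Finset X₁)) (𝒞₂ : Finset (Finset X₂))
    (h₁ : 𝒞₁.Nonempty) (h₂ : 𝒞₂.Nonempty) :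
    ANCTD (FreeComb 𝒞₁ 𝒞₂) = ANCTD 𝒞₁ + ANCTD 𝒞₂ := by
  classical
  have hc1 : (0 : ℝ) < 𝒞₁.card := by exact_mod_cast h₁.card_pos
  have hc2 : (0 : ℝ) < 𝒞₂.card := by exact_mod_cast h₂.card_pos
  -- injectivity of the pairing on the product
  have hinj : Set.InjOn (fun p : Finset X₁ × Finset X₂ => p.1.image Sum.inl ∪ p.2.image Sum.inr)
      ↑(𝒞₁ ×ˢ 𝒞₂) := by
    rintro ⟨a1, a2⟩ _ ⟨b1, b2⟩ _ h
    have := comb_inj (C₁ := a1) (C₂ := a2) (D₁ := b1) (D₂ := b2) h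
    simp [Prod.ext_iff, this.1, this.2]
  have hcardFC : ((FreeComb 𝒞₁ 𝒞₂).card : ℝ) = 𝒞₁.card * 𝒞₂.card := by
    rw [FreeComb, Finset.card_image_of_injOn hinj, Finset.card_product]
    push_cast; ring
  have hsumFC : ∀ (g : Finset (X₁ ⊕ X₂) → ℝ),
      ∑ C ∈ FreeComb 𝒞₁ 𝒞₂, g C = ∑ p ∈ 𝒞₁ ×ˢ 𝒞₂, g (comb p.1 p.2) := by
    intro g
    rw [FreeComb, Finset.sum_image hinj]
    rfl
  apply le_antisymm
  · -- ≤ : combine teachers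
    rw [ANCTD_eq 𝒞₁, ANCTD_eq 𝒞₂, ← sub_le_iff_le_add]
    apply le_csInf (ASet_nonempty 𝒞₁)
    rintro q1 ⟨T₁, hT₁t, hT₁n, rfl⟩
    rw [sub_le_iff_le_add, add_comm, ← sub_le_iff_le_add]
    apply le_csInf (ASet_nonempty 𝒞₂)
    rintro q2 ⟨T₂, hT₂t, hT₂n, rfl⟩
    rw [sub_le_iff_le_add]
    -- build combined teacher
    set T : Finset (X₁ ⊕ X₂) → Finset ((X₁ ⊕ X₂) × Bool) := fun C =>
      ((T₁ (C.preimage Sum.inl Sum.inl_injective.injOn)).image (Prod.map Sum.inl id)) ∪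
      ((T₂ (C.preimage Sum.inr Sum.inr_injective.injOn)).image (Prod.map Sum.inr id)) with hT
    have hpre1 : ∀ (C₁ : Finset X₁) (C₂ : Finset X₂),
        (comb C₁ C₂).preimage Sum.inl Sum.inl_injective.injOn = C₁ := by
      intro C₁ C₂; ext x; simp [Finset.mem_preimage, mem_comb_inl]
    have hpre2 : ∀ (C₁ : Finset X₁) (C₂ : Finset X₂),
        (comb C₁ C₂).preimage Sum.inr Sum.inr_injective.injOn = C₂ := by
      intro C₁ C₂; ext y; simp [Finset.mem_preimage, mem_comb_inr]
    have hTcomb : ∀ (C₁ : Finset X₁) (C₂ : Finset X₂),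
        T (comb C₁ C₂) = ((T₁ C₁).image (Prod.map Sum.inl id)) ∪
          ((T₂ C₂).image (Prod.map Sum.inr id)) := by
      intro C₁ C₂; rw [hT]; simp only [hpre1, hpre2]
    have hconsT : ∀ (C₁ D₁ : Finset X₁) (C₂ D₂ : Finset X₂),
        Consistent (comb D₁ D₂) (T (comb C₁ C₂)) ↔
          Consistent D₁ (T₁ C₁) ∧ Consistent D₂ (T₂ C₂) := by
      intro C₁ D₁ C₂ D₂
      rw [hTcomb]
      constructor
      · intro h
        constructor
        · rintro ⟨x, b⟩ hp
          have := h (Sum.inl x, b) (by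
            apply Finset.mem_union_left
            exact Finset.mem_image_of_mem _ hp)
          simpa [mem_comb_inl] using this
        · rintro ⟨y, b⟩ hp
          have := h (Sum.inr y, b) (by
            apply Finset.mem_union_right
            exact Finset.mem_image_of_mem _ hp)
          simpa [mem_comb_inr] using this
      · rintro ⟨hl, hr⟩ ⟨x, b⟩ hp
        rw [Finset.mem_union] at hp
        rcases hp with hp | hp
        · simp only [Finset.mem_image, Prod.ext_iff] at hp
          obtain ⟨⟨x', b'⟩, hmem, hx, hb⟩ := hp
          subst hx; subst hb
          simpa [mem_comb_inl] using hl (x', b') hmem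
        · simp only [Finset.mem_image, Prod.ext_iff] at hp
          obtain ⟨⟨y', b'⟩, hmem, hy, hb⟩ := hp
          subst hy; subst hb
          simpa [mem_comb_inr] using hr (y', b') hmem
    have hmemFC : ∀ C ∈ FreeComb 𝒞₁ 𝒞₂, ∃ C₁ ∈ 𝒞₁, ∃ C₂ ∈ 𝒞₂, C = comb C₁ C₂ := by
      intro C hC
      simp only [FreeComb, mem_image, mem_product] at hC
      obtain ⟨⟨C₁, C₂⟩, ⟨hC₁, hC₂⟩, rfl⟩ := hC
      exact ⟨C₁, hC₁, C₂, hC₂, rfl⟩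
    have hTt : IsTeacher (FreeComb 𝒞₁ 𝒞₂) T := by
      intro C hC
      obtain ⟨C₁, hC₁, C₂, hC₂, rfl⟩ := hmemFC C hC
      exact (hconsT C₁ C₁ C₂ C₂).mpr ⟨hT₁t C₁ hC₁, hT₂t C₂ hC₂⟩
    have hTn : NonClashing (FreeComb 𝒞₁ 𝒞₂) T := by
      intro C hC C' hC' hne ⟨hcc', hc'c⟩
      obtain ⟨C₁, hC₁, C₂, hC₂, rfl⟩ := hmemFC C hC
      obtain ⟨D₁, hD₁, D₂, hD₂, rfl⟩ := hmemFC C' hC'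
      rw [hconsT] at hcc' hc'c
      by_cases h12 : C₁ = D₁
      · subst h12
        have hne2 : C₂ ≠ D₂ := fun h => hne (by rw [h])
        exact hT₂n C₂ hC₂ D₂ hD₂ hne2 ⟨hcc'.2, hc'c.2⟩
      · exact hT₁n C₁ hC₁ D₁ hD₁ h12 ⟨hcc'.1, hc'c.1⟩
    -- the value of the combined teacher
    have hcardT : ∀ (C₁ : Finset X₁) (C₂ : Finset X₂),
        ((T (comb C₁ C₂)).card : ℝ) = (T₁ C₁).card + (T₂ C₂).card := by
      intro C₁ C₂
      rw [hTcomb]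
      have hinl : Function.Injective (Prod.map (Sum.inl : X₁ → X₁ ⊕ X₂) (id : Bool → Bool)) :=
        Sum.inl_injective.prodMap Function.injective_id
      have hinr : Function.Injective (Prod.map (Sum.inr : X₂ → X₁ ⊕ X₂) (id : Bool → Bool)) :=
        Sum.inr_injective.prodMap Function.injective_id
      have hdisj : Disjoint ((T₁ C₁).image (Prod.map Sum.inl id))
          ((T₂ C₂).image (Prod.map Sum.inr id)) := by
        rw [disjoint_left]
        rintro ⟨x, b⟩ ha hb
        simp only [Finset.mem_image, Prod.map, Prod.mk.injEq] at ha hb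
        obtain ⟨_, _, hx1, _⟩ := ha
        obtain ⟨_, _, hx2, _⟩ := hb
        rw [← hx1] at hx2
        cases hx2
      rw [card_union_of_disjoint hdisj, Finset.card_image_of_injective _ hinl,
        Finset.card_image_of_injective _ hinr]
      push_cast; ring
    have hval : (∑ C ∈ FreeComb 𝒞₁ 𝒞₂, ((T C).card : ℝ)) / (FreeComb 𝒞₁ 𝒞₂).card =
        (∑ C ∈ 𝒞₁, ((T₁ C).card : ℝ)) / 𝒞₁.card + (∑ C ∈ 𝒞₂, ((T₂ C).card : ℝ)) / 𝒞₂.card := by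
      rw [hsumFC, hcardFC]
      rw [Finset.sum_product]
      have : ∑ x ∈ 𝒞₁, ∑ y ∈ 𝒞₂, ((T (comb x y)).card : ℝ)
          = ∑ x ∈ 𝒞₁, ∑ y ∈ 𝒞₂, (((T₁ x).card : ℝ) + (T₂ y).card) := by
        apply Finset.sum_congr rfl; intro x _
        apply Finset.sum_congr rfl; intro y _
        exact hcardT x y
      rw [this]
      simp only [Finset.sum_add_distrib, Finset.sum_const, nsmul_eq_mul, Finset.sum_comm (s := 𝒞₁)]
      field_simp
      rw [Finset.mul_sum, Finset.mul_sum]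
    calc ANCTD (FreeComb 𝒞₁ 𝒞₂) ≤
        (∑ C ∈ FreeComb 𝒞₁ 𝒞₂, ((T C).card : ℝ)) / (FreeComb 𝒞₁ 𝒞₂).card :=
          ANCTD_le_of_mem _ ⟨T, hTt, hTn, rfl⟩
      _ = _ := by rw [hval, add_comm]
  · -- ≥ : project teachers
    rw [ANCTD_eq (FreeComb 𝒞₁ 𝒞₂)]
    apply le_csInf (ASet_nonempty _)
    rintro q ⟨T, hTt, hTn, rfl⟩
    -- for each fixed C₂, the left projection is a teacher on 𝒞₁
    have hleft : ∀ C₂ ∈ 𝒞₂, 𝒞₁.card * ANCTD 𝒞₁ ≤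
        ∑ C₁ ∈ 𝒞₁, ((lS (T (comb C₁ C₂))).card : ℝ) := by
      intro C₂ hC₂
      have hmem : (∑ C₁ ∈ 𝒞₁, ((lS (T (comb C₁ C₂))).card : ℝ)) / 𝒞₁.card ∈ ASet 𝒞₁ := by
        refine ⟨fun C₁ => lS (T (comb C₁ C₂)), ?_, ?_, rfl⟩
        · intro C₁ hC₁
          exact (consistent_comb.mp (hTt _ (mem_freeComb hC₁ hC₂))).1
        · intro C₁ hC₁ D₁ hD₁ hne ⟨h1, h2⟩
          have hneC : comb C₁ C₂ ≠ comb D₁ C₂ := fun h => hne (comb_inj h).1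
          refine hTn _ (mem_freeComb hC₁ hC₂) _ (mem_freeComb hD₁ hC₂) hneC ⟨?_, ?_⟩
          · exact consistent_comb.mpr ⟨h1, (consistent_comb.mp (hTt _ (mem_freeComb hC₁ hC₂))).2⟩
          · exact consistent_comb.mpr ⟨h2, (consistent_comb.mp (hTt _ (mem_freeComb hD₁ hC₂))).2⟩
      have := ANCTD_le_of_mem 𝒞₁ hmem
      rw [le_div_iff₀ hc1] at this
      linarith [this]
    have hright : ∀ C₁ ∈ 𝒞₁, 𝒞₂.card * ANCTD 𝒞₂ ≤
        ∑ C₂ ∈ 𝒞₂, ((rS (T (comb C₁ C₂))).card : ℝ) := by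
      intro C₁ hC₁
      have hmem : (∑ C₂ ∈ 𝒞₂, ((rS (T (comb C₁ C₂))).card : ℝ)) / 𝒞₂.card ∈ ASet 𝒞₂ := by
        refine ⟨fun C₂ => rS (T (comb C₁ C₂)), ?_, ?_, rfl⟩
        · intro C₂ hC₂
          exact (consistent_comb.mp (hTt _ (mem_freeComb hC₁ hC₂))).2
        · intro C₂ hC₂ D₂ hD₂ hne ⟨h1, h2⟩
          have hneC : comb C₁ C₂ ≠ comb C₁ D₂ := fun h => hne (comb_inj h).2
          refine hTn _ (mem_freeComb hC₁ hC₂) _ (mem_freeComb hC₁ hD₂) hneC ⟨?_, ?_⟩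
          · exact consistent_comb.mpr ⟨(consistent_comb.mp (hTt _ (mem_freeComb hC₁ hC₂))).1, h1⟩
          · exact consistent_comb.mpr ⟨(consistent_comb.mp (hTt _ (mem_freeComb hC₁ hD₂))).1, h2⟩
      have := ANCTD_le_of_mem 𝒞₂ hmem
      rw [le_div_iff₀ hc2] at this
      linarith [this]
    rw [hsumFC, hcardFC]
    rw [Finset.sum_product]
    have hsplit : ∑ x ∈ 𝒞₁, ∑ y ∈ 𝒞₂, ((T (comb x y)).card : ℝ)
        = ∑ x ∈ 𝒞₁, ∑ y ∈ 𝒞₂, (((lS (T (comb x y))).card : ℝ) + (rS (T (comb x y))).card) := by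
      apply Finset.sum_congr rfl; intro x _
      apply Finset.sum_congr rfl; intro y _
      exact card_split _
    rw [hsplit]
    rw [le_div_iff₀ (by positivity)]
    have h1 : ∑ x ∈ 𝒞₁, ∑ y ∈ 𝒞₂, ((lS (T (comb x y))).card : ℝ)
        ≥ 𝒞₂.card * (𝒞₁.card * ANCTD 𝒞₁) := by
      rw [Finset.sum_comm]
      calc (𝒞₂.card : ℝ) * (𝒞₁.card * ANCTD 𝒞₁)
          = ∑ _y ∈ 𝒞₂, (𝒞₁.card * ANCTD 𝒞₁) := by rw [Finset.sum_const, nsmul_eq_mul]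
        _ ≤ _ := Finset.sum_le_sum (fun y hy => hleft y hy)
    have h2 : ∑ x ∈ 𝒞₁, ∑ y ∈ 𝒞₂, ((rS (T (comb x y))).card : ℝ)
        ≥ 𝒞₁.card * (𝒞₂.card * ANCTD 𝒞₂) := by
      calc (𝒞₁.card : ℝ) * (𝒞₂.card * ANCTD 𝒞₂)
          = ∑ _x ∈ 𝒞₁, (𝒞₂.card * ANCTD 𝒞₂) := by rw [Finset.sum_const, nsmul_eq_mul]
        _ ≤ _ := Finset.sum_le_sum (fun x hx => hright x hx)
    simp only [Finset.sum_add_distrib] at *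
    nlinarith [h1, h2]
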